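/- Let d > 1 and let k = 2^m − 1 for an integer m > 1. Let M_k be the square matrix indexed by F_{2^d}^* whose (u,v) entry is the number of x ∈ F_{2^d}^* with v·u⁻¹ = x^k + x^{k−1}, and let N_k be the matrix obtained from M_k by replacing every nonzero entry with 1. Then the rank over F₂ of N_k equals the rank over F₂ of M_k (i.e., of the reduction of M_k modulo 2). -/

import Mathlib

/-- The rank of a (finite) square matrix over a commutative ring `K`. -/
noncomputable def matRank (K : Type*) [CommRing K] {ι : Type*} [Finite ι]
    (M : Matrix ι ι K) : ℕ :=
  letI : Fintype ι := Fintype.ofFinite ι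
  M.rank

/-- The `(u,v)` entry of the circulant matrix `M_k`: the number of `x ∈ F_{2^d}ˣ` with
`v * u⁻¹ = x^k + x^{k-1}`. -/
noncomputable def Mmat (k d : ℕ) (u v : (GaloisField 2 d)ˣ) : ℕ :=
  Nat.card {x : (GaloisField 2 d)ˣ //
    (x : GaloisField 2 d) ^ k + (x : GaloisField 2 d) ^ (k - 1) =
      ((v * u⁻¹ : (GaloisField 2 d)ˣ) : GaloisField 2 d)}

open Module in
/-- The fiber of `x ↦ x^k + x^{k-1}` over any `c` has cardinality `2^j - 1` for some `j`:
via `y = x⁻¹`, the equation becomes `c·y^{2^m} + y² + y = 0`, whose solution set is an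
`F₂`-subspace. -/
lemma key_fiber_card (d m k : ℕ) (hm : 1 < m) (hk : k = 2 ^ m - 1)
    (c : GaloisField 2 d) :
    ∃ j : ℕ, Nat.card {x : (GaloisField 2 d)ˣ //
      (x : GaloisField 2 d) ^ k + (x : GaloisField 2 d) ^ (k - 1) = c} = 2 ^ j - 1 := by
  classical
  obtain ⟨n, hn⟩ : ∃ n, 2 ^ m = n + 2 := by
    have : 4 ≤ 2 ^ m := by calc 4 = 2^2 := rfl
                                _ ≤ 2^m := Nat.pow_le_pow_right (by norm_num) hm
    exact ⟨2 ^ m - 2, by omega⟩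
  have hk1 : k = n + 1 := by omega
  have hk2 : k - 1 = n := by omega
  -- the additive map
  let f : GaloisField 2 d →+ GaloisField 2 d :=
  { toFun := fun y => c * y ^ (2 ^ m) + (y ^ 2 + y)
    map_zero' := by simp [(by omega : 2 ^ m ≠ 0)]
    map_add' := by
      intro a b
      show c * (a + b) ^ (2 ^ m) + ((a + b) ^ 2 + (a + b)) = _
      rw [add_pow_char_pow, add_pow_char]
      show _ = c * a ^ (2 ^ m) + (a ^ 2 + a) + (c * b ^ (2 ^ m) + (b ^ 2 + b))
      ring }
  let L := f.toZModLinearMap 2 (M := GaloisField 2 d) (M₁ := GaloisField 2 d)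
  have hmem : ∀ y : GaloisField 2 d,
      y ∈ LinearMap.ker L ↔ c * y ^ (2 ^ m) + (y ^ 2 + y) = 0 := by
    intro y; rfl
  have crux : ∀ x : GaloisField 2 d, x ≠ 0 →
      (x ^ k + x ^ (k - 1) = c ↔ x⁻¹ ∈ LinearMap.ker L) := by
    intro x hx
    rw [hmem, hk2, hk1, hn]
    have hkey : c * x⁻¹ ^ (n + 2) + (x⁻¹ ^ 2 + x⁻¹)
        = (c + (x ^ (n + 1) + x ^ n)) * (x⁻¹) ^ (n + 2) := by
      have hx' : x * x⁻¹ = 1 := mul_inv_cancel₀ hx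
      have hxn : (x * x⁻¹) ^ n = 1 := by rw [hx', one_pow]
      linear_combination (-(x * x⁻¹ ^ 2) - x⁻¹ ^ 2) * hxn + (-x⁻¹) * hx'
    have h2 : (x⁻¹) ^ (n + 2) ≠ 0 := pow_ne_zero _ (inv_ne_zero hx)
    rw [hkey, mul_eq_zero]
    simp only [h2, or_false]
    rw [add_eq_zero_iff_eq_neg, CharTwo.neg_eq, eq_comm]
  -- the equivalence
  let e : {x : (GaloisField 2 d)ˣ //
        (x : GaloisField 2 d) ^ k + (x : GaloisField 2 d) ^ (k - 1) = c} ≃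
      {y : GaloisField 2 d // y ∈ LinearMap.ker L ∧ y ≠ 0} :=
  { toFun := fun x => ⟨((x : (GaloisField 2 d)ˣ) : GaloisField 2 d)⁻¹,
      (crux _ (Units.ne_zero _)).mp x.2, inv_ne_zero (Units.ne_zero _)⟩
    invFun := fun y => ⟨Units.mk0 ((y : GaloisField 2 d))⁻¹ (inv_ne_zero y.2.2), by
      have h := (crux ((y : GaloisField 2 d))⁻¹ (inv_ne_zero y.2.2)).mpr
      rw [inv_inv] at h
      exact h y.2.1⟩
    left_inv := fun x => by
      apply Subtype.ext; apply Units.ext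
      show ((x : (GaloisField 2 d)ˣ) : GaloisField 2 d)⁻¹⁻¹ = _
      rw [inv_inv]
    right_inv := fun y => by
      apply Subtype.ext
      show ((y : GaloisField 2 d))⁻¹⁻¹ = _
      rw [inv_inv] }
  letI : Fintype (GaloisField 2 d) := Fintype.ofFinite _
  have h1 : Nat.card {x : (GaloisField 2 d)ˣ //
        (x : GaloisField 2 d) ^ k + (x : GaloisField 2 d) ^ (k - 1) = c}
      = Nat.card {y : GaloisField 2 d // y ∈ LinearMap.ker L ∧ y ≠ 0} :=
    Nat.card_congr e
  have h2 : Nat.card {y : GaloisField 2 d // y ∈ LinearMap.ker L ∧ y ≠ 0}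
      = Nat.card (LinearMap.ker L) - 1 := by
    rw [Nat.card_congr (Equiv.subtypeSubtypeEquivSubtypeInter
      (fun y : GaloisField 2 d => y ∈ LinearMap.ker L) (fun y => y ≠ 0)).symm]
    rw [Nat.card_eq_fintype_card, Nat.card_eq_fintype_card]
    have hone : Fintype.card {z : LinearMap.ker L // (z : GaloisField 2 d) = 0} = 1 := by
      rw [Fintype.card_eq_one_iff]
      refine ⟨⟨0, by simp⟩, fun z => ?_⟩
      apply Subtype.ext
      apply Subtype.ext
      simpa using z.2
    have hcompl := Fintype.card_subtype_compl
      (fun z : LinearMap.ker L => (z : GaloisField 2 d) = 0)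
    rw [hone] at hcompl
    convert hcompl using 2
  have h3 : Nat.card (LinearMap.ker L)
      = 2 ^ finrank (ZMod 2) (LinearMap.ker L) := by
    rw [Nat.card_eq_fintype_card]
    have := card_eq_pow_finrank (K := ZMod 2) (V := LinearMap.ker L)
    rwa [ZMod.card] at this
  exact ⟨_, by rw [h1, h2, h3]⟩

/-- Each entry of `M_k` is `0` or odd, so the 0-1 matrix `N_k` equals `M_k` mod 2. -/
lemma entry_eq (d m k : ℕ) (hm : 1 < m) (hk : k = 2 ^ m - 1)
    (u v : (GaloisField 2 d)ˣ) :
    (if Mmat k d u v ≠ 0 then (1 : ZMod 2) else 0) = (Mmat k d u v : ZMod 2) := by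
  obtain ⟨j, hj⟩ := key_fiber_card d m k hm hk
    ((v * u⁻¹ : (GaloisField 2 d)ˣ) : GaloisField 2 d)
  have hM : Mmat k d u v = 2 ^ j - 1 := hj
  cases j with
  | zero => simp [hM]
  | succ j =>
    have h2 : 1 < 2 ^ (j + 1) := Nat.one_lt_two_pow_iff.mpr (by omega)
    have hne : Mmat k d u v ≠ 0 := by omega
    rw [if_pos hne, hM, Nat.cast_sub (by omega)]
    push_cast
    rw [show (2 : ZMod 2) = 0 by decide]
    rw [zero_pow (by omega)]
    decide

/-- For `d > 1` and `k = 2^m - 1` with `m > 1`, the 0-1 matrix `N_k` obtained from `M_k`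
by replacing each nonzero entry with 1 has the same rank over `F₂` as `M_k`
(reduced mod 2). -/
theorem stmt_18 (d m k : ℕ) (hd : 1 < d) (hm : 1 < m) (hk : k = 2 ^ m - 1) :
    matRank (ZMod 2)
      (Matrix.of fun u v : (GaloisField 2 d)ˣ =>
        if Mmat k d u v ≠ 0 then (1 : ZMod 2) else 0) =
    matRank (ZMod 2)
      (Matrix.of fun u v : (GaloisField 2 d)ˣ => (Mmat k d u v : ZMod 2)) := by
  congr 1
  ext u v
  exact entry_eq d m k hm hk u v
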